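/- If μ and λ are infinite cardinals with 2^μ ≤ λ, then the Tychonoff product of any family of weakly initially λ-compact topological spaces is weakly initially μ-compact. -/

import Mathlib

open Cardinal Set

universe u v

/-- `x` is a `D`-limit point of the family of sets `O`. -/
def DLimitSets {X : Type u} {I : Type v} [TopologicalSpace X]
    (D : Ultrafilter I) (O : I → Set X) (x : X) : Prop :=
  ∀ U ∈ nhds x, {i | (U ∩ O i).Nonempty} ∈ D

/-- `X` is `D`-pseudocompact. -/
def DPseudocompact (X : Type u) {I : Type v} [TopologicalSpace X]
    (D : Ultrafilter I) : Prop :=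
  ∀ O : I → Set X, (∀ i, IsOpen (O i)) → (∀ i, (O i).Nonempty) →
    ∃ x : X, DLimitSets D O x

/-- Every open cover of cardinality at most `lam` has a finite subfamily with dense union. -/
def WeaklyInitiallyCompact (X : Type u) [TopologicalSpace X] (lam : Cardinal.{u}) : Prop :=
  ∀ 𝒰 : Set (Set X), (∀ U ∈ 𝒰, IsOpen U) → ⋃₀ 𝒰 = Set.univ →
    Cardinal.mk 𝒰 ≤ lam →
    ∃ t : Finset (Set X), ↑t ⊆ 𝒰 ∧ Dense (⋃₀ (t : Set (Set X)))

/-- A regular ultrafilter over `I` (regular of degree `|I|`): there is an `I`-indexed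
family of members of `D` every infinite subfamily of which has empty intersection. -/
def RegularUltrafilter {I : Type v} (D : Ultrafilter I) : Prop :=
  ∃ Z : I → Set I, (∀ i, Z i ∈ D) ∧
    ∀ S : Set I, S.Infinite → ⋂ i ∈ S, Z i = ∅

lemma exists_regular_ultrafilter (mu : Cardinal.{u}) (hmu : Cardinal.aleph0 ≤ mu) :
    ∃ (I : Type u) (D : Ultrafilter I), Cardinal.mk I = mu ∧ RegularUltrafilter D := by
  set K := mu.out with hKdef
  have hK : Cardinal.mk K = mu := Cardinal.mk_out mu
  haveI : Infinite K := Cardinal.infinite_iff.2 (hK ▸ hmu)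
  set Zh : K → Set (Finset K) := fun a => {s | a ∈ s} with hZh
  have hZinj : Function.Injective Zh := by
    intro a b hab
    have h1 : ({b} : Finset K) ∈ Zh b := Finset.mem_singleton_self b
    rw [← hab] at h1
    simpa [hZh] using h1
  have cond : ∀ T : Finset (Set (Finset K)), (↑T : Set (Set (Finset K))) ⊆ Set.range Zh →
      (⋂₀ (↑T : Set (Set (Finset K)))).Nonempty := by
    intro T hT
    have hfin : (Zh ⁻¹' (T : Set (Set (Finset K)))).Finite :=
      Set.Finite.preimage hZinj.injOn T.finite_toSet
    refine ⟨hfin.toFinset, ?_⟩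
    intro W hW
    obtain ⟨a, rfl⟩ := hT hW
    show a ∈ hfin.toFinset
    rw [Set.Finite.mem_toFinset]
    exact hW
  obtain ⟨D, hD⟩ := Ultrafilter.exists_ultrafilter_of_finite_inter_nonempty
      (Set.range Zh) cond
  refine ⟨Finset K, D, ?_, ?_⟩
  · rw [Cardinal.mk_finset_of_infinite, hK]
  · have hcardeq : Cardinal.mk (Finset K) = Cardinal.mk K := Cardinal.mk_finset_of_infinite K
    obtain ⟨e⟩ := Cardinal.eq.1 hcardeq
    refine ⟨fun i => Zh (e i), fun i => hD (Set.mem_range_self _), ?_⟩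
    intro S hS
    rw [Set.eq_empty_iff_forall_notMem]
    intro s hs
    rw [Set.mem_iInter₂] at hs
    have himg : (e '' S).Infinite := hS.image (e.injective.injOn)
    refine himg (s.finite_toSet.subset ?_)
    rintro _ ⟨i, hi, rfl⟩
    exact hs i hi

lemma wic_dpseudo {X : Type u} [TopologicalSpace X] {lam : Cardinal.{u}}
    {I : Type u} (D : Ultrafilter I) (hcard : (2 : Cardinal.{u}) ^ Cardinal.mk I ≤ lam)
    (h : WeaklyInitiallyCompact X lam) : DPseudocompact X D := by
  classical
  intro O hOopen hOne
  by_contra hno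
  push_neg at hno
  have hx : ∀ x : X, ∃ U : Set X, x ∈ U ∧ IsOpen U ∧ {i | (U ∩ O i).Nonempty} ∉ D := by
    intro x
    have h1 := hno x
    unfold DLimitSets at h1
    push_neg at h1
    obtain ⟨U, hU, hUD⟩ := h1
    refine ⟨interior U, mem_interior_iff_mem_nhds.2 hU, isOpen_interior, fun hmem => hUD ?_⟩
    exact Filter.mem_of_superset hmem
      (fun i hi => hi.mono (Set.inter_subset_inter_left _ interior_subset))
  choose U hxU hUopen hUD using hx
  set A : X → Set I := fun x => {i | (U x ∩ O i).Nonempty}ᶜ with hA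
  have hAD : ∀ x, A x ∈ D := fun x => Ultrafilter.compl_mem_iff_notMem.2 (hUD x)
  set V : Set I → Set X := fun B => ⋃ x ∈ A ⁻¹' {B}, U x with hV
  have hVopen : ∀ B, IsOpen (V B) := fun B => isOpen_biUnion (fun x _ => hUopen x)
  have hcover : ⋃₀ (Set.range V) = Set.univ := by
    rw [Set.eq_univ_iff_forall]
    intro x
    exact ⟨V (A x), Set.mem_range_self _, Set.mem_biUnion rfl (hxU x)⟩
  have hcard2 : Cardinal.mk (Set.range V) ≤ lam := by
    refine le_trans Cardinal.mk_range_le ?_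
    rw [Cardinal.mk_set]
    exact hcard
  obtain ⟨t, ht𝒱, htdense⟩ := h (Set.range V) (fun W hW => by
      obtain ⟨B, rfl⟩ := hW; exact hVopen B) hcover hcard2
  have key : ∀ W : Set X, W ∈ t → W.Nonempty → ∃ B ∈ D, W = V B := by
    intro W hW hWne
    obtain ⟨B, hB⟩ := ht𝒱 hW
    obtain ⟨y, hy⟩ := hWne
    rw [← hB] at hy
    obtain ⟨x, hxB, hyU⟩ := Set.mem_iUnion₂.1 hy
    have hxB' : A x = B := hxB
    exact ⟨B, hxB' ▸ hAD x, hB.symm⟩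
  set g : Set X → Set I := fun W =>
    if hw : W ∈ t ∧ W.Nonempty then (key W hw.1 hw.2).choose else Set.univ with hg
  have hgpos : ∀ (W : Set X) (hw : W ∈ t ∧ W.Nonempty),
      g W = (key W hw.1 hw.2).choose := fun W hw => dif_pos hw
  have hgD : ∀ W, g W ∈ D := by
    intro W
    by_cases hw : W ∈ t ∧ W.Nonempty
    · rw [hgpos W hw]; exact (key W hw.1 hw.2).choose_spec.1
    · have : g W = Set.univ := dif_neg hw
      rw [this]; exact Filter.univ_mem
  have hT : (⋂ W ∈ t, g W) ∈ D := (Filter.biInter_finset_mem t).2 fun W _ => hgD W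
  obtain ⟨i, hi⟩ := Filter.nonempty_of_mem hT
  obtain ⟨y, hyt, hyO⟩ := htdense.exists_mem_open (hOopen i) (hOne i)
  obtain ⟨W, hWt, hyW⟩ := hyt
  have hWt' : W ∈ t := hWt
  have hw : W ∈ t ∧ W.Nonempty := ⟨hWt', ⟨y, hyW⟩⟩
  have hgW : g W = (key W hw.1 hw.2).choose := hgpos W hw
  have hspec := (key W hw.1 hw.2).choose_spec
  have hiW : i ∈ g W := Set.mem_iInter₂.1 hi W hWt'
  rw [hgW] at hiW
  -- y ∈ W = V B
  have hyV : y ∈ V (key W hw.1 hw.2).choose := hspec.2 ▸ hyW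
  obtain ⟨x, hxB, hyU⟩ := Set.mem_iUnion₂.1 hyV
  have hxB' : A x = (key W hw.1 hw.2).choose := hxB
  rw [← hxB'] at hiW
  exact hiW ⟨y, hyU, hyO⟩

lemma dpseudo_pi {J : Type u} {X : J → Type u} [∀ j, TopologicalSpace (X j)]
    {I : Type v} (D : Ultrafilter I) (h : ∀ j, DPseudocompact (X j) D) :
    DPseudocompact (∀ j, X j) D := by
  classical
  intro O hOopen hOne
  choose p hp using hOne
  have hbasis : ∀ i, ∃ (F : Finset J) (u : ∀ j, Set (X j)),
      (∀ j, j ∈ F → IsOpen (u j) ∧ p i j ∈ u j) ∧ (F : Set J).pi u ⊆ O i :=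
    fun i => (isOpen_pi_iff.1 (hOopen i)) (p i) (hp i)
  choose F u hu hsub using hbasis
  set O' : (j : J) → I → Set (X j) := fun j i => if j ∈ F i then u i j else Set.univ
    with hO'
  have hO'open : ∀ j i, IsOpen (O' j i) := by
    intro j i
    by_cases hj : j ∈ F i
    · have : O' j i = u i j := if_pos hj
      rw [this]; exact (hu i j hj).1
    · have : O' j i = Set.univ := if_neg hj
      rw [this]; exact isOpen_univ
  have hO'mem : ∀ j i, p i j ∈ O' j i := by
    intro j i
    by_cases hj : j ∈ F i
    · have : O' j i = u i j := if_pos hj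
      rw [this]; exact (hu i j hj).2
    · have : O' j i = Set.univ := if_neg hj
      rw [this]; trivial
  have hxex : ∀ j, ∃ x : X j, DLimitSets D (O' j) x :=
    fun j => h j (O' j) (hO'open j) (fun i => ⟨p i j, hO'mem j i⟩)
  choose x hx using hxex
  refine ⟨x, ?_⟩
  intro Uu hUu
  obtain ⟨W, hWU, hWopen, hxW⟩ := mem_nhds_iff.1 hUu
  obtain ⟨G, v, hv, hvW⟩ := isOpen_pi_iff.1 hWopen x hxW
  have hT : (⋂ j ∈ G, {i | (v j ∩ O' j i).Nonempty}) ∈ D :=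
    (Filter.biInter_finset_mem G).2 fun j hj =>
      hx j (v j) ((hv j hj).1.mem_nhds (hv j hj).2)
  refine Filter.mem_of_superset hT ?_
  intro i hi
  rw [Set.mem_iInter₂] at hi
  have hq : ∀ j, ∃ y : X j, (j ∈ G → y ∈ v j) ∧ y ∈ O' j i := by
    intro j
    by_cases hj : j ∈ G
    · obtain ⟨y, hy1, hy2⟩ := hi j hj
      exact ⟨y, fun _ => hy1, hy2⟩
    · exact ⟨p i j, fun hc => absurd hc hj, hO'mem j i⟩
  choose q hq1 hq2 using hq
  have hqW : q ∈ (G : Set J).pi v := fun j hj => hq1 j hj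
  have hqO : q ∈ O i := by
    apply hsub i
    intro j hj
    have := hq2 j
    have heq : O' j i = u i j := if_pos hj
    rw [heq] at this
    exact this
  exact ⟨q, hWU (hvW hqW), hqO⟩

lemma dpseudo_wic {X : Type u} [TopologicalSpace X] {I : Type u} {D : Ultrafilter I}
    (hreg : RegularUltrafilter D) (h : DPseudocompact X D) :
    WeaklyInitiallyCompact X (Cardinal.mk I) := by
  classical
  intro 𝒰 hopen hcover hcard
  rcases isEmpty_or_nonempty X with hE | hNE
  · refine ⟨∅, by simp, ?_⟩
    intro z
    exact isEmptyElim z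
  by_contra hno
  push_neg at hno
  obtain ⟨Z, hZD, hZreg⟩ := hreg
  -- 𝒰 is nonempty
  obtain ⟨x0⟩ := hNE
  have hx0 : x0 ∈ ⋃₀ 𝒰 := hcover ▸ Set.mem_univ x0
  obtain ⟨U0, hU0, _⟩ := hx0
  haveI : Nonempty ↥𝒰 := ⟨⟨U0, hU0⟩⟩
  obtain ⟨emb⟩ := Cardinal.le_def _ _ |>.1 hcard
  set f : I → ↥𝒰 := Function.invFun emb with hf
  have hfsurj : Function.Surjective f := Function.invFun_surjective emb.injective
  have hfin : ∀ i, {j : I | i ∈ Z j}.Finite := by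
    intro i
    by_contra hinf
    have : ⋂ j ∈ {j : I | i ∈ Z j}, Z j = ∅ := hZreg _ hinf
    have hmem : i ∈ ⋂ j ∈ {j : I | i ∈ Z j}, Z j := Set.mem_iInter₂.2 fun j hj => hj
    rw [this] at hmem
    exact hmem
  -- the finite subfamily associated to i
  set t : I → Finset (Set X) := fun i => (hfin i).toFinset.image (fun j => (f j : Set X))
    with ht
  have htsub : ∀ i, ↑(t i) ⊆ 𝒰 := by
    intro i W hW
    simp only [ht, Finset.coe_image, Set.mem_image] at hW
    obtain ⟨j, _, rfl⟩ := hW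
    exact (f j).2
  have hOex : ∀ i, ∃ V : Set X, IsOpen V ∧ V.Nonempty ∧ V ∩ ⋃₀ ↑(t i) = ∅ := by
    intro i
    have hnd := hno (t i) (htsub i)
    rw [Dense] at hnd
    push_neg at hnd
    obtain ⟨z, hz⟩ := hnd
    rw [mem_closure_iff] at hz
    push_neg at hz
    obtain ⟨V, hVopen, hzV, hVdis⟩ := hz
    exact ⟨V, hVopen, ⟨z, hzV⟩, hVdis⟩
  choose O hOopen hOne hOdis using hOex
  obtain ⟨x, hxlim⟩ := h O hOopen hOne
  have hxU : x ∈ ⋃₀ 𝒰 := hcover ▸ Set.mem_univ x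
  obtain ⟨U, hU, hxUmem⟩ := hxU
  obtain ⟨j0, hj0⟩ := hfsurj ⟨U, hU⟩
  have hA : {i | (U ∩ O i).Nonempty} ∈ D :=
    hxlim U ((hopen U hU).mem_nhds hxUmem)
  have hAZ : ({i | (U ∩ O i).Nonempty} ∩ Z j0) ∈ D := Filter.inter_mem hA (hZD j0)
  obtain ⟨i, hi1, hi2⟩ := Filter.nonempty_of_mem hAZ
  -- j0 ∈ support of i, so U ∈ t i
  have hUti : U ∈ t i := by
    simp only [ht, Finset.mem_image]
    refine ⟨j0, ?_, by rw [hj0]⟩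
    rw [Set.Finite.mem_toFinset]
    exact hi2
  obtain ⟨y, hy1, hy2⟩ := hi1
  have : y ∈ O i ∩ ⋃₀ ↑(t i) := ⟨hy2, ⟨U, hUti, hy1⟩⟩
  rw [hOdis i] at this
  exact this

theorem product_weaklyInitiallyCompact (mu lam : Cardinal.{u})
    (hmu : Cardinal.aleph0 ≤ mu) (hlam : Cardinal.aleph0 ≤ lam)
    (h2 : 2 ^ mu ≤ lam)
    {J : Type u} {X : J → Type u} [∀ j, TopologicalSpace (X j)]
    (hX : ∀ j, WeaklyInitiallyCompact (X j) lam) :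
    WeaklyInitiallyCompact (∀ j, X j) mu := by
  obtain ⟨I, D, hI, hreg⟩ := exists_regular_ultrafilter mu hmu
  have hcard : (2 : Cardinal.{u}) ^ Cardinal.mk I ≤ lam := by rw [hI]; exact h2
  have hd : ∀ j, DPseudocompact (X j) D := fun j => wic_dpseudo D hcard (hX j)
  have hp := dpseudo_pi D hd
  have hres := dpseudo_wic hreg hp
  rwa [hI] at hres
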